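/- Switch structure of the low-complexity suboptimal policy in the uniform case (Theorem 4, part 1, of the paper): in the uniform-channel setting, suppose V : 𝒬 → ℝ is separable with monotone components, i.e., V(Q) = Σ_m V_m(Q m) where each V_m : ℕ → ℝ is non-decreasing. If content u minimizes the state-action cost at state Q, i.e., J_V(Q, u) ≤ J_V(Q, v) for all v ∈ Fin M, and Q u < N u, then J_V(Q + e_u, u) ≤ J_V(Q + e_u, v) for all v ∈ Fin M. Hence the suboptimal policy μ̂* built from the separable approximate value function has the same switch structure as the optimal policy. -/

import Mathlib

open Finset

/-- State space of the uniform-channel multicast MDP: request queue vectors capped by `N`. -/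
def QSpace (M : ℕ) (N : Fin M → ℕ) : Type :=
  {Q : Fin M → ℕ // ∀ m, Q m ≤ N m}

/-- Next state when content `u` is multicast in state `Q` and arrival `a` occurs. -/
def nextQ {M : ℕ} {N : Fin M → ℕ} (Q : QSpace M N) (u : Fin M) (a : Fin M → ℕ) :
    QSpace M N :=
  ⟨fun m => min ((if m = u then 0 else Q.1 m) + a m) (N m), fun _ => min_le_right _ _⟩

/-- Per-stage cost in the uniform case. -/
noncomputable def gCost {M : ℕ} {N : Fin M → ℕ} (wp wf : ℝ) (p f : Fin M → ℝ)
    (Q : QSpace M N) (u : Fin M) : ℝ :=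
  (∑ m, (Q.1 m : ℝ)) + wp * p u + wf * f u

/-- State-action cost function `J_V(Q,u)`. -/
noncomputable def JCost {M : ℕ} {N : Fin M → ℕ} (𝒜 : Finset (Fin M → ℕ))
    (ρ : (Fin M → ℕ) → ℝ) (wp wf : ℝ) (p f : Fin M → ℝ)
    (V : QSpace M N → ℝ) (Q : QSpace M N) (u : Fin M) : ℝ :=
  gCost wp wf p f Q u + ∑ a ∈ 𝒜, ρ a * V (nextQ Q u a)

/-- The state `Q + e_u`: component `u` is increased by 1 (requires `Q u < N u`). -/
def addE {M : ℕ} {N : Fin M → ℕ} (Q : QSpace M N) (u : Fin M) (h : Q.1 u < N u) :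
    QSpace M N :=
  ⟨Function.update Q.1 u (Q.1 u + 1), by
    intro m
    rcases eq_or_ne m u with rfl | hm
    · rw [Function.update_self]; exact h
    · rw [Function.update_of_ne hm]; exact Q.2 m⟩

/-- Switch structure of the low-complexity suboptimal policy in the uniform case
(Theorem 4, part 1): for a separable value function `V(Q) = Σ_m V_m(Q_m)` with
non-decreasing components `V_m`, if content `u` minimizes the state-action cost at `Q`,
then it still does at `Q + e_u`. -/
theorem suboptimal_policy_switch_structure
    {M : ℕ} (hM : 1 ≤ M) (N : Fin M → ℕ)
    (𝒜 : Finset (Fin M → ℕ)) (ρ : (Fin M → ℕ) → ℝ)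
    (hρ0 : ∀ a ∈ 𝒜, 0 ≤ ρ a) (hρ1 : ∑ a ∈ 𝒜, ρ a = 1)
    (wp wf : ℝ) (p f : Fin M → ℝ)
    (Vm : Fin M → ℕ → ℝ) (hVm : ∀ m, Monotone (Vm m)) :
    ∀ (Q : QSpace M N) (u : Fin M) (h : Q.1 u < N u),
      (∀ v : Fin M,
        JCost 𝒜 ρ wp wf p f (fun Q' => ∑ m, Vm m (Q'.1 m)) Q u ≤
          JCost 𝒜 ρ wp wf p f (fun Q' => ∑ m, Vm m (Q'.1 m)) Q v) →
      ∀ v : Fin M,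
        JCost 𝒜 ρ wp wf p f (fun Q' => ∑ m, Vm m (Q'.1 m)) (addE Q u h) u ≤
          JCost 𝒜 ρ wp wf p f (fun Q' => ∑ m, Vm m (Q'.1 m)) (addE Q u h) v := by
  intro Q u h hmin v
  set W : QSpace M N → ℝ := fun Q' => ∑ m, Vm m (Q'.1 m) with hW
  have hsum : (∑ m, ((addE Q u h).1 m : ℝ)) = (∑ m, (Q.1 m : ℝ)) + 1 := by
    have key : ∀ m, ((addE Q u h).1 m : ℝ) = (Q.1 m : ℝ) + if m = u then 1 else 0 := by
      intro m
      rcases eq_or_ne m u with rfl | hm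
      · simp [addE]
      · simp [addE, Function.update_of_ne hm, hm]
    rw [Finset.sum_congr rfl (fun m _ => key m), Finset.sum_add_distrib,
      Finset.sum_ite_eq' Finset.univ u]
    simp
  have hg : ∀ w, gCost (N := N) wp wf p f (addE Q u h) w = gCost wp wf p f Q w + 1 := by
    intro w; simp only [gCost, hsum]; ring
  have hnext_u : ∀ a, nextQ (addE Q u h) u a = nextQ Q u a := by
    intro a
    apply Subtype.ext; funext m
    rcases eq_or_ne m u with rfl | hm
    · simp [nextQ]
    · simp [nextQ, hm, addE, Function.update_of_ne hm]
  have hV : ∀ w a, W (nextQ Q w a) ≤ W (nextQ (addE Q u h) w a) := by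
    intro w a
    apply Finset.sum_le_sum
    intro m _
    rcases eq_or_ne m u with rfl | hm
    · rcases eq_or_ne m w with rfl | hw
      · simp [nextQ]
      · simp only [nextQ, if_neg hw, addE, Function.update_self]
        exact hVm m (min_le_min (by omega) le_rfl)
    · simp [nextQ, addE, Function.update_of_ne hm]
  calc JCost 𝒜 ρ wp wf p f W (addE Q u h) u
      = JCost 𝒜 ρ wp wf p f W Q u + 1 := by
        simp only [JCost, hg]
        rw [Finset.sum_congr rfl (fun a _ => by rw [hnext_u a])]
        ring
    _ ≤ JCost 𝒜 ρ wp wf p f W Q v + 1 := by linarith [hmin v]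
    _ ≤ JCost 𝒜 ρ wp wf p f W (addE Q u h) v := by
        simp only [JCost, hg]
        have hle : ∑ a ∈ 𝒜, ρ a * W (nextQ Q v a) ≤ ∑ a ∈ 𝒜, ρ a * W (nextQ (addE Q u h) v a) :=
          Finset.sum_le_sum fun a ha => mul_le_mul_of_nonneg_left (hV v a) (hρ0 a ha)
        linarith
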